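/- Let V be a reflexive complex Banach space with continuous dual space V*, let W be a complex Banach space, let K : V → V* be a compact bounded linear operator, and let T : V → W be an injective bounded linear operator. Then for every ε > 0 there exists a constant C_ε > 0 such that |(K u)(u)| ≤ ε‖u‖_V² + C_ε‖T u‖_W² for all u ∈ V. -/

import Mathlib

open NormedSpace Filter Metric Topology

set_option maxHeartbeats 1000000 in
/-- **Lemma 4.2 (Gesztesy–Mitrea).**
Let `V` be a reflexive complex Banach space with continuous dual `V*`, `W` a complex Banach
space, `K : V → V*` a compact bounded linear operator and `T : V → W` an injective bounded
linear operator. Then for every `ε > 0` there is `C_ε > 0` with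
`|⟨u, K u⟩| ≤ ε ‖u‖² + C_ε ‖T u‖²` for all `u ∈ V`. -/
theorem compact_quadratic_form_estimate
    {V W : Type*} [NormedAddCommGroup V] [NormedSpace ℂ V] [CompleteSpace V]
    [NormedAddCommGroup W] [NormedSpace ℂ W] [CompleteSpace W]
    (hrefl : Function.Surjective (NormedSpace.inclusionInDoubleDual ℂ V))
    (K : V →L[ℂ] StrongDual ℂ V) (hK : IsCompactOperator K)
    (T : V →L[ℂ] W) (hT : Function.Injective T) :
    ∀ ε > 0, ∃ C > 0, ∀ u : V, ‖K u u‖ ≤ ε * ‖u‖ ^ 2 + C * ‖T u‖ ^ 2 := by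
  intro ε hε
  by_contra hcon
  push_neg at hcon
  -- extract a normalized sequence
  have hseq : ∀ n : ℕ, ∃ v : V, ‖v‖ = 1 ∧ ε + (n + 1) * ‖T v‖ ^ 2 < ‖K v v‖ := by
    intro n
    obtain ⟨u, hu⟩ := hcon (n + 1) (by positivity)
    have hu0 : u ≠ 0 := by rintro rfl; simp at hu
    have hnu : (0:ℝ) < ‖u‖ := norm_pos_iff.mpr hu0
    refine ⟨(‖u‖⁻¹ : ℂ) • u, ?_, ?_⟩
    · simp [norm_smul, inv_mul_cancel₀ hnu.ne']
    · have h1 : K ((‖u‖⁻¹ : ℂ) • u) ((‖u‖⁻¹ : ℂ) • u)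
          = (‖u‖⁻¹ : ℂ) * ((‖u‖⁻¹ : ℂ) * K u u) := by
        simp [map_smul, ContinuousLinearMap.smul_apply, smul_eq_mul]
      have h2 : ‖K ((‖u‖⁻¹ : ℂ) • u) ((‖u‖⁻¹ : ℂ) • u)‖ = ‖u‖⁻¹ * (‖u‖⁻¹ * ‖K u u‖) := by
        rw [h1]; simp [norm_mul]
      have h3 : ‖T ((‖u‖⁻¹ : ℂ) • u)‖ ^ 2 = ‖u‖⁻¹ ^ 2 * ‖T u‖ ^ 2 := by
        rw [map_smul, norm_smul]; simp; ring
      rw [h2, h3]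
      have := hu
      have h4 : ε * ‖u‖ ^ 2 + (↑n + 1) * ‖T u‖ ^ 2 < ‖K u u‖ := hu
      have h5 : (0:ℝ) < ‖u‖ ^ 2 := by positivity
      have : (ε + (↑n + 1) * (‖u‖⁻¹ ^ 2 * ‖T u‖ ^ 2)) * ‖u‖ ^ 2
          < ‖u‖⁻¹ * (‖u‖⁻¹ * ‖K u u‖) * ‖u‖ ^ 2 := by
        have hinv : ‖u‖⁻¹ ^ 2 * ‖u‖ ^ 2 = 1 := by
          field_simp
        calc (ε + (↑n + 1) * (‖u‖⁻¹ ^ 2 * ‖T u‖ ^ 2)) * ‖u‖ ^ 2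
            = ε * ‖u‖ ^ 2 + (↑n + 1) * ‖T u‖ ^ 2 * (‖u‖⁻¹ ^ 2 * ‖u‖ ^ 2) := by ring
          _ = ε * ‖u‖ ^ 2 + (↑n + 1) * ‖T u‖ ^ 2 := by rw [hinv]; ring
          _ < ‖K u u‖ := h4
          _ = ‖u‖⁻¹ * (‖u‖⁻¹ * ‖K u u‖) * ‖u‖ ^ 2 := by
              rw [show ‖u‖⁻¹ * (‖u‖⁻¹ * ‖K u u‖) * ‖u‖ ^ 2
                  = ‖K u u‖ * (‖u‖⁻¹ ^ 2 * ‖u‖ ^ 2) by ring, hinv, mul_one]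
      exact lt_of_mul_lt_mul_right this h5.le
  choose v hv1 hv2 using hseq
  have hKb : ∀ n, ‖K (v n) (v n)‖ ≤ ‖K‖ := by
    intro n
    calc ‖K (v n) (v n)‖ ≤ ‖K (v n)‖ * ‖v n‖ := (K (v n)).le_opNorm _
      _ ≤ (‖K‖ * ‖v n‖) * ‖v n‖ := by gcongr; exact K.le_opNorm _
      _ = ‖K‖ := by rw [hv1]; ring
  have hTv2 : ∀ n : ℕ, ‖T (v n)‖ ^ 2 ≤ ‖K‖ / (n + 1) := by
    intro n
    have h := (hv2 n).le.trans (hKb n)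
    rw [le_div_iff₀ (by positivity)]
    nlinarith [hε]
  have h0 : Tendsto (fun n : ℕ => ‖K‖ / (n + 1)) atTop (𝓝 0) := by
    have := (tendsto_const_div_atTop_nhds_zero_nat ‖K‖).comp (tendsto_add_atTop_nat 1)
    simpa [Function.comp_def, Nat.cast_add, Nat.cast_one] using this
  have hsq : Tendsto (fun n => ‖T (v n)‖ ^ 2) atTop (𝓝 0) :=
    squeeze_zero (fun n => by positivity) hTv2 h0
  have hTv : Tendsto (fun n => ‖T (v n)‖) atTop (𝓝 0) := by
    have := hsq.sqrt
    simpa [Real.sqrt_sq (norm_nonneg _)] using this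
  set 𝒰 : Ultrafilter ℕ := Ultrafilter.of atTop with h𝒰def
  have h𝒰 : (𝒰 : Filter ℕ) ≤ atTop := Ultrafilter.of_le _
  -- strong limit of K (v n) along the ultrafilter
  obtain ⟨S, hScomp, hSmem⟩ := hK
  obtain ⟨r, hr, hrball⟩ := Metric.mem_nhds_iff.mp hSmem
  set c : ℂ := ((r / 2 : ℝ) : ℂ) with hcdef
  have hc0 : c ≠ 0 := by
    simp only [hcdef, Ne, Complex.ofReal_eq_zero]
    positivity
  have hmem : ∀ n, K (c • v n) ∈ S := by
    intro n
    apply hrball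
    have hcn : ‖c‖ = r / 2 := by
      rw [hcdef, Complex.norm_real, Real.norm_eq_abs, abs_of_pos (by positivity)]
    rw [mem_ball_zero_iff, norm_smul, hv1 n, mul_one, hcn]
    linarith
  obtain ⟨g, hgS, hg⟩ := hScomp.ultrafilter_le_nhds (𝒰.map fun n => K (c • v n))
    (by rw [le_principal_iff, Ultrafilter.mem_coe, Ultrafilter.mem_map]
        exact Filter.univ_mem' hmem)
  have hg' : Tendsto (fun n => K (c • v n)) (𝒰 : Filter ℕ) (𝓝 g) := hg
  have hstrong : Tendsto (fun n => K (v n)) (𝒰 : Filter ℕ) (𝓝 (c⁻¹ • g)) := by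
    have h2 := hg'.const_smul c⁻¹
    simpa [map_smul, smul_smul, inv_mul_cancel₀ hc0] using h2
  -- weak limit along the ultrafilter
  set jj : ℕ → WeakDual ℂ (StrongDual ℂ V) :=
    fun n => StrongDual.toWeakDual (inclusionInDoubleDual ℂ V (v n)) with hjjdef
  obtain ⟨x, hxmem, hx⟩ := (WeakDual.isCompact_closedBall (𝕜 := ℂ) 0 1).ultrafilter_le_nhds (𝒰.map jj)
    (by rw [le_principal_iff, Ultrafilter.mem_coe, Ultrafilter.mem_map]
        apply Filter.univ_mem'
        intro n
        simp only [Set.mem_preimage, mem_closedBall_zero_iff, hjjdef]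
        calc ‖(inclusionInDoubleDual ℂ V (v n) : StrongDual ℂ (StrongDual ℂ V))‖
            ≤ ‖v n‖ := double_dual_bound ℂ V _
          _ = 1 := hv1 n)
  have hx' : Tendsto jj (𝒰 : Filter ℕ) (𝓝 x) := hx
  obtain ⟨u, hu⟩ := hrefl (WeakDual.toStrongDual x)
  have heval : ∀ g : StrongDual ℂ V, Tendsto (fun n => g (v n)) (𝒰 : Filter ℕ) (𝓝 (g u)) := by
    intro g
    have h1 : Tendsto (fun n => jj n g) (𝒰 : Filter ℕ) (𝓝 (x g)) :=
      ((WeakDual.eval_continuous g).tendsto x).comp hx'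
    have hxg : x g = g u := by
      have h2 := congrArg (fun φ : StrongDual ℂ (StrongDual ℂ V) => φ g) hu
      simpa [NormedSpace.dual_def] using h2.symm
    have hjg : ∀ n, jj n g = g (v n) := by
      intro n
      rfl
    rw [hxg] at h1
    simpa [hjg] using h1
  -- T u = 0, hence u = 0
  have hTu : T u = 0 := by
    apply NormedSpace.eq_zero_of_forall_dual_eq_zero ℂ
    intro ψ
    have h1 : Tendsto (fun n => ψ (T (v n))) (𝒰 : Filter ℕ) (𝓝 (ψ (T u))) := by
      have := heval (ψ ∘L T)
      simpa using this
    have h2 : Tendsto (fun n => ψ (T (v n))) (𝒰 : Filter ℕ) (𝓝 0) := by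
      refine Tendsto.mono_left ?_ h𝒰
      rw [tendsto_zero_iff_norm_tendsto_zero]
      refine squeeze_zero (fun n => norm_nonneg _) (fun n => ψ.le_opNorm _) ?_
      simpa using hTv.const_mul ‖ψ‖
    exact tendsto_nhds_unique h1 h2
  have hu0 : u = 0 := hT (by rw [hTu, map_zero])
  -- the strong limit is 0
  have hg0 : c⁻¹ • g = 0 := by
    apply ContinuousLinearMap.ext
    intro w
    have h1 : Tendsto (fun n => K (v n) w) (𝒰 : Filter ℕ) (𝓝 ((c⁻¹ • g) w)) :=
      ((ContinuousLinearMap.apply ℂ ℂ w).continuous.tendsto _).comp hstrong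
    have h2 : Tendsto (fun n => K (v n) w) (𝒰 : Filter ℕ) (𝓝 (0 : ℂ)) := by
      have h3 := heval (K.flip w)
      simpa [ContinuousLinearMap.flip_apply, hu0] using h3
    have := tendsto_nhds_unique h1 h2
    simpa using this
  rw [hg0] at hstrong
  have hnorm : Tendsto (fun n => ‖K (v n)‖) (𝒰 : Filter ℕ) (𝓝 0) := by
    simpa using hstrong.norm
  have hev : ∀ᶠ n in (𝒰 : Filter ℕ), ‖K (v n)‖ < ε :=
    hnorm.eventually (Filter.Tendsto.eventually_lt_const hε tendsto_id) |>.mono (fun n h => h)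
  obtain ⟨n, hn⟩ := hev.exists
  have hle : ‖K (v n) (v n)‖ ≤ ‖K (v n)‖ := by
    calc ‖K (v n) (v n)‖ ≤ ‖K (v n)‖ * ‖v n‖ := (K (v n)).le_opNorm _
      _ = ‖K (v n)‖ := by rw [hv1]; ring
  have := hv2 n
  nlinarith [sq_nonneg ‖T (v n)‖, (show (0:ℝ) ≤ (n:ℝ) + 1 by positivity)]
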